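/- Let n ∈ ℕ with n ≥ 3, let 𝒯=(T,w) be a positive-weighted tree, and suppose 1,…,n are (distinct) vertices of T. Define D_{î} = D_{[n]∖{i}}(𝒯) for each i ∈ [n]. Then for every i ∈ [n] one has (n−2)·D_{î} ≤ Σ_{j ∈ [n]∖{i}} D_{ĵ}, and at most one of these n inequalities is an equality. -/

import Mathlib

open SimpleGraph Finset

/-- The total weight of a subgraph: the sum of the weights of its edges. -/
noncomputable def subgraphWeight {V : Type} [Fintype V] {G : SimpleGraph V}
    (w : Sym2 V → ℝ) (R : G.Subgraph) : ℝ :=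
  ∑ e ∈ (Set.toFinite R.edgeSet).toFinset, w e

/-- `graphDist G w I` is the minimum of `subgraphWeight w R` over connected
subgraphs `R` of `G` whose vertex set contains `I`. -/
noncomputable def graphDist {V : Type} [Fintype V] (G : SimpleGraph V)
    (w : Sym2 V → ℝ) (I : Set V) : ℝ :=
  sInf { x : ℝ | ∃ R : G.Subgraph, R.Connected ∧ I ⊆ R.verts ∧ subgraphWeight w R = x }

/-- A weight function is positive on a graph if every edge has positive weight. -/
def PosWeighted {V : Type} (G : SimpleGraph V) (w : Sym2 V → ℝ) : Prop :=
  ∀ e ∈ G.edgeSet, 0 < w e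

namespace TreeIneqAux

variable {V : Type} {T : SimpleGraph V}

/-- `Sep T e a b` : removing edge `e` from `T` disconnects `a` from `b`. -/
def Sep (T : SimpleGraph V) (e : Sym2 V) (a b : V) : Prop :=
  ¬ (T.deleteEdges {e}).Reachable a b

lemma Sep.symm {e : Sym2 V} {a b : V} (h : Sep T e a b) : Sep T e b a :=
  fun hr => h hr.symm

lemma not_sep_self {e : Sym2 V} {a : V} : ¬ Sep T e a a :=
  fun h => h (Reachable.refl a)

lemma Sep.trans_not {e : Sym2 V} {a b c : V} (h : Sep T e a b) (h2 : ¬ Sep T e b c) :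
    Sep T e a c :=
  fun hr => h (hr.trans (not_not.mp h2).symm)

lemma exists_mem_edges_of_ne {a b : V} (hab : a ≠ b) (p : T.Walk a b) :
    ∃ e, e ∈ p.edges := by
  cases p with
  | nil => exact absurd rfl hab
  | cons h q => exact ⟨_, List.mem_cons_self⟩

lemma mem_edges_of_sep {e : Sym2 V} {a b : V} (p : T.Walk a b) (h : Sep T e a b) :
    e ∈ p.edges := by
  by_contra he
  exact h ⟨p.toDeleteEdges {e} (fun f hf => by
    simp only [Set.mem_singleton_iff]
    rintro rfl; exact he hf)⟩

lemma sep_of_mem_edges (hac : T.IsAcyclic) {e : Sym2 V} {a b : V} {p : T.Walk a b}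
    (hp : p.IsPath) (he : e ∈ p.edges) : Sep T e a b := by
  classical
  rintro ⟨q'⟩
  have hq : ∀ f ∈ q'.edges, f ∈ T.edgeSet := by
    intro f hf
    have := q'.edges_subset_edgeSet hf
    rw [edgeSet_deleteEdges] at this
    exact this.1
  have hnot : e ∉ q'.edges := by
    intro hf
    have := q'.edges_subset_edgeSet hf
    rw [edgeSet_deleteEdges] at this
    exact this.2 rfl
  set q : T.Walk a b := q'.transfer T hq with hqdef
  have hpath := isAcyclic_iff_path_unique.mp hac (⟨p, hp⟩ : T.Path a b) q.toPath
  have : e ∈ q.edges := by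
    have := congrArg (fun (r : T.Path a b) => (r : T.Walk a b)) hpath
    simp only at this
    have h1 : e ∈ (q.toPath : T.Walk a b).edges := this ▸ he
    exact q.edges_bypass_subset h1
  rw [hqdef, Walk.edges_transfer] at this
  exact hnot this

lemma reach_or {e : Sym2 V} {u v : V} (he : e = s(u, v)) :
    ∀ {c z : V} (_ : T.Walk c z),
      (T.deleteEdges {e}).Reachable c z ∨ (T.deleteEdges {e}).Reachable c u ∨
        (T.deleteEdges {e}).Reachable c v := by
  intro c z p
  induction p with
  | nil => exact Or.inl (Reachable.refl _)
  | @cons c d z h q ih =>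
    by_cases hce : s(c, d) = e
    · rw [he, Sym2.eq_iff] at hce
      rcases hce with ⟨rfl, rfl⟩ | ⟨rfl, rfl⟩
      · exact Or.inr (Or.inl (Reachable.refl _))
      · exact Or.inr (Or.inr (Reachable.refl _))
    · have hadj : (T.deleteEdges {e}).Adj c d := by
        rw [SimpleGraph.deleteEdges_adj]
        exact ⟨h, by simpa using hce⟩
      rcases ih with h1 | h1 | h1
      · exact Or.inl (hadj.reachable.trans h1)
      · exact Or.inr (Or.inl (hadj.reachable.trans h1))
      · exact Or.inr (Or.inr (hadj.reachable.trans h1))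

lemma side_or (hc : T.Connected) {u v : V} (hadj : T.Adj u v) (c : V) :
    (T.deleteEdges {s(u, v)}).Reachable c u ∨ (T.deleteEdges {s(u, v)}).Reachable c v := by
  obtain ⟨p⟩ := hc.preconnected c u
  rcases reach_or rfl p with h | h | h
  · exact Or.inl h
  · exact Or.inl h
  · exact Or.inr h

lemma not_sep_of_sep_sep (hc : T.Connected) {e : Sym2 V} (he : e ∈ T.edgeSet) {a b c : V}
    (h1 : Sep T e a b) (h2 : Sep T e a c) : ¬ Sep T e b c := by
  induction e using Sym2.ind with
  | _ u v =>
    rw [mem_edgeSet] at he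
    intro h3
    rcases side_or hc he a with ha | ha <;> rcases side_or hc he b with hb | hb <;>
      rcases side_or hc he c with hcc | hcc <;>
      first
        | exact h1 (ha.trans hb.symm)
        | exact h2 (ha.trans hcc.symm)
        | exact h3 (hb.trans hcc.symm)


variable [Fintype V]

open Classical in
/-- The set of edges of `T` separating two points of `S` (the Steiner tree edge set). -/
noncomputable def stE (T : SimpleGraph V) (S : Finset V) : Finset (Sym2 V) :=
  (Set.toFinite T.edgeSet).toFinset.filter fun e => ∃ a ∈ S, ∃ b ∈ S, Sep T e a b

lemma mem_stE {S : Finset V} {e : Sym2 V} :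
    e ∈ stE T S ↔ e ∈ T.edgeSet ∧ ∃ a ∈ S, ∃ b ∈ S, Sep T e a b := by
  classical
  unfold stE
  rw [Finset.mem_filter, Set.Finite.mem_toFinset]

lemma stE_mono {S S' : Finset V} (h : S ⊆ S') : stE T S ⊆ stE T S' := by
  intro e he
  rw [mem_stE] at he ⊢
  obtain ⟨h1, a, ha, b, hb, hs⟩ := he
  exact ⟨h1, a, h ha, b, h hb, hs⟩

lemma edges_map_hom_subset {R : T.Subgraph} :
    ∀ {x y : R.verts} (q : R.coe.Walk x y), ∀ f ∈ (q.map R.hom).edges, f ∈ R.edgeSet := by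
  intro x y q
  induction q with
  | nil => simp
  | @cons x' y' z' h q ih =>
    intro f hf
    rw [Walk.map_cons, Walk.edges_cons, List.mem_cons] at hf
    rcases hf with rfl | hf
    · exact Subgraph.mem_edgeSet.mpr h
    · exact ih f hf

lemma graphDist_eq (hT : T.IsTree) {w : Sym2 V → ℝ} (hw : PosWeighted T w)
    {S : Finset V} (hS : S.Nonempty) :
    graphDist T w ↑S = ∑ e ∈ stE T S, w e := by
  classical
  -- lower bound: every competitor contains all edges of `stE T S`
  have lb : ∀ x ∈ {x : ℝ | ∃ R : T.Subgraph, R.Connected ∧ ↑S ⊆ R.verts ∧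
      subgraphWeight w R = x}, (∑ e ∈ stE T S, w e) ≤ x := by
    rintro x ⟨R, hRc, hRv, rfl⟩
    have hsub : stE T S ⊆ (Set.toFinite R.edgeSet).toFinset := by
      intro e he
      rw [Set.Finite.mem_toFinset]
      obtain ⟨heT, a, ha, b, hb, hsep⟩ := mem_stE.mp he
      by_contra heR
      obtain ⟨q⟩ := hRc.coe.preconnected ⟨a, hRv ha⟩ ⟨b, hRv hb⟩
      have heq : e ∈ (q.map R.hom).edges := mem_edges_of_sep _ hsep
      exact heR (edges_map_hom_subset q e heq)
    refine Finset.sum_le_sum_of_subset_of_nonneg hsub fun f hf _ => ?_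
    rw [Set.Finite.mem_toFinset] at hf
    exact (hw f (R.edgeSet_subset hf)).le
  -- upper bound: construct the union of paths from a base point
  obtain ⟨a0, ha0⟩ := id hS
  have hpath : ∀ b : V, ∃ p : T.Walk a0 b, p.IsPath := fun b =>
    (hT.isConnected.preconnected a0 b).elim fun q => ⟨q.toPath.1, q.toPath.2⟩
  choose pth hpth using hpath
  have hconn : (S.sup' hS fun b => (pth b).toSubgraph).Connected ∧
      a0 ∈ (S.sup' hS fun b => (pth b).toSubgraph).verts := by
    refine Finset.sup'_induction
      (p := fun H : T.Subgraph => H.Connected ∧ a0 ∈ H.verts) hS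
      (fun b => (pth b).toSubgraph) ?_ ?_
    · rintro H ⟨hH, haH⟩ K ⟨hK, haK⟩
      exact ⟨Subgraph.connected_sup hH.preconnected hK.preconnected ⟨a0, haH, haK⟩, Or.inl haH⟩
    · intro b _
      exact ⟨(pth b).toSubgraph_connected, (pth b).start_mem_verts_toSubgraph⟩
  set R : T.Subgraph := S.sup' hS fun b => (pth b).toSubgraph with hRdef
  have hverts : ↑S ⊆ R.verts := by
    intro b hb
    rw [Finset.mem_coe] at hb
    exact Subgraph.verts_mono (Finset.le_sup' (fun b => (pth b).toSubgraph) hb)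
      ((pth b).end_mem_verts_toSubgraph)
  have hE1 : R.edgeSet ⊆ ↑(stE T S) := by
    rw [hRdef]
    refine Finset.sup'_induction (p := fun H : T.Subgraph => H.edgeSet ⊆ ↑(stE T S)) hS
      (fun b => (pth b).toSubgraph) ?_ ?_
    · intro H hH K hK
      rw [Subgraph.edgeSet_sup]
      exact Set.union_subset hH hK
    · intro b hb e he
      rw [Walk.edgeSet_toSubgraph, Walk.mem_edgeSet] at he
      rw [Finset.mem_coe, mem_stE]
      exact ⟨(pth b).edges_subset_edgeSet he, a0, ha0, b, hb,
        sep_of_mem_edges hT.IsAcyclic (hpth b) he⟩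
  have hE2 : ↑(stE T S) ⊆ R.edgeSet := by
    intro e he
    rw [Finset.mem_coe, mem_stE] at he
    obtain ⟨heT, a, ha, b, hb, hsep⟩ := he
    have hsc : ∃ c ∈ S, Sep T e a0 c := by
      by_contra h
      push_neg at h
      exact hsep ((not_not.mp (h a ha)).symm.trans (not_not.mp (h b hb)))
    obtain ⟨c, hc, hsepc⟩ := hsc
    have : e ∈ (pth c).toSubgraph.edgeSet := by
      rw [Walk.edgeSet_toSubgraph, Walk.mem_edgeSet]
      exact mem_edges_of_sep _ hsepc
    exact Subgraph.edgeSet_mono (Finset.le_sup' (fun b => (pth b).toSubgraph) hc) this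
  have hEq : R.edgeSet = ↑(stE T S) := Set.Subset.antisymm hE1 hE2
  have hRw : subgraphWeight w R = ∑ e ∈ stE T S, w e := by
    unfold subgraphWeight
    apply Finset.sum_congr _ fun _ _ => rfl
    ext f
    rw [Set.Finite.mem_toFinset, hEq, Finset.mem_coe]
  have hmem : (∑ e ∈ stE T S, w e) ∈ {x : ℝ | ∃ R : T.Subgraph, R.Connected ∧ ↑S ⊆ R.verts ∧
      subgraphWeight w R = x} := ⟨R, hconn.1, hverts, hRw⟩
  exact le_antisymm (csInf_le ⟨_, lb⟩ hmem) (le_csInf ⟨_, hmem⟩ lb)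

end TreeIneqAux

open TreeIneqAux in
/-- Theorem 3.2(a), necessity: if `1,…,n` are distinct vertices of a
positive-weighted tree, then `(n-2)·D_î ≤ ∑_{j≠i} D_ĵ` for every `i`, and at
most one of these inequalities is an equality. -/
theorem tree_vertices_ineq {n : ℕ} (hn : 3 ≤ n) {V : Type} [Fintype V]
    (T : SimpleGraph V) (w : Sym2 V → ℝ) (hT : T.IsTree) (hw : PosWeighted T w)
    (ι : Fin n → V) (hι : Function.Injective ι) :
    (∀ i : Fin n, ((n : ℝ) - 2) * graphDist T w (ι '' {j | j ≠ i}) ≤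
        ∑ j ∈ Finset.univ.erase i, graphDist T w (ι '' {k | k ≠ j})) ∧
      (∀ i i' : Fin n,
        ((n : ℝ) - 2) * graphDist T w (ι '' {j | j ≠ i}) =
            ∑ j ∈ Finset.univ.erase i, graphDist T w (ι '' {k | k ≠ j}) →
        ((n : ℝ) - 2) * graphDist T w (ι '' {j | j ≠ i'}) =
            ∑ j ∈ Finset.univ.erase i', graphDist T w (ι '' {k | k ≠ j}) →
        i = i') := by
  classical
  have hcon := hT.isConnected
  have hac := hT.IsAcyclic
  have hnR : (3 : ℝ) ≤ (n : ℝ) := by exact_mod_cast hn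
  set F : Finset (Sym2 V) := stE T (Finset.univ.image ι) with hF
  set Fi : Fin n → Finset (Sym2 V) :=
    fun i => stE T ((Finset.univ.erase i).image ι) with hFidef
  have hsub : ∀ i, Fi i ⊆ F := fun i =>
    stE_mono (Finset.image_subset_image (Finset.erase_subset _ _))
  have hex : ∀ i : Fin n, ∃ j : Fin n, j ≠ i := by
    intro i
    have h1 : 1 < (Finset.univ : Finset (Fin n)).card := by
      rw [Finset.card_univ, Fintype.card_fin]; omega
    obtain ⟨j, -, hj⟩ := Finset.exists_mem_ne h1 i
    exact ⟨j, hj⟩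
  have hkey : ∀ i : Fin n, graphDist T w (ι '' {j | j ≠ i}) = ∑ e ∈ Fi i, w e := by
    intro i
    have h1 : ι '' {j | j ≠ i} = ↑((Finset.univ.erase i).image ι) := by
      ext x
      constructor
      · rintro ⟨j, hj, rfl⟩
        exact Finset.mem_coe.mpr
          (Finset.mem_image_of_mem ι (Finset.mem_erase.mpr ⟨hj, Finset.mem_univ j⟩))
      · intro hx
        rcases Finset.mem_image.mp (Finset.mem_coe.mp hx) with ⟨j, hj, rfl⟩
        exact ⟨j, (Finset.mem_erase.mp hj).1, rfl⟩
    have hne' : ((Finset.univ.erase i).image ι).Nonempty := by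
      obtain ⟨j, hj⟩ := hex i
      exact ⟨ι j, Finset.mem_image_of_mem ι (Finset.mem_erase.mpr ⟨hj, Finset.mem_univ j⟩)⟩
    rw [h1]
    exact graphDist_eq hT hw hne'
  have hwpos : ∀ e ∈ F, 0 < w e := fun e he => hw e (mem_stE.mp he).1
  -- K1 : edges outside `Fi i` separate `ι i` from everything else
  have K1 : ∀ i : Fin n, ∀ e ∈ F \ Fi i, ∀ j : Fin n, j ≠ i → Sep T e (ι i) (ι j) := by
    intro i e he j hj
    rw [Finset.mem_sdiff] at he
    obtain ⟨heF, heI⟩ := he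
    obtain ⟨heT, a, ha, b, hb, hsep⟩ := mem_stE.mp heF
    obtain ⟨k, -, rfl⟩ := Finset.mem_image.mp ha
    obtain ⟨l, -, rfl⟩ := Finset.mem_image.mp hb
    have hnot : ∀ k l : Fin n, k ≠ i → l ≠ i → ¬ Sep T e (ι k) (ι l) := by
      intro k l hk hl hskl
      exact heI (mem_stE.mpr ⟨heT, ι k,
        Finset.mem_image_of_mem ι (Finset.mem_erase.mpr ⟨hk, Finset.mem_univ _⟩), ι l,
        Finset.mem_image_of_mem ι (Finset.mem_erase.mpr ⟨hl, Finset.mem_univ _⟩), hskl⟩)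
    have hstep : ∃ l₀ : Fin n, l₀ ≠ i ∧ Sep T e (ι i) (ι l₀) := by
      by_cases hk : k = i
      · by_cases hl : l = i
        · rw [hk, hl] at hsep
          exact absurd hsep not_sep_self
        · rw [hk] at hsep
          exact ⟨l, hl, hsep⟩
      · by_cases hl : l = i
        · rw [hl] at hsep
          exact ⟨k, hk, hsep.symm⟩
        · exact absurd hsep (hnot k l hk hl)
    obtain ⟨l₀, hl₀, hsl₀⟩ := hstep
    by_cases hjl : j = l₀
    · exact hjl ▸ hsl₀
    · exact hsl₀.trans_not (hnot l₀ j hl₀ hj)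
  -- K2 : the complements are pairwise disjoint
  have K2 : ∀ i j : Fin n, i ≠ j → Disjoint (F \ Fi i) (F \ Fi j) := by
    intro i j hij
    rw [Finset.disjoint_left]
    intro e hei hej
    obtain ⟨k, hki, hkj⟩ : ∃ k : Fin n, k ≠ i ∧ k ≠ j := by
      by_contra h
      push_neg at h
      have hsub2 : (Finset.univ : Finset (Fin n)) ⊆ {i, j} := by
        intro x _
        by_cases hx : x = i
        · simp [hx]
        · simp [h x hx]
      have hc1 := Finset.card_le_card hsub2
      rw [Finset.card_univ, Fintype.card_fin] at hc1
      have hc2 : ({i, j} : Finset (Fin n)).card ≤ 2 :=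
        (Finset.card_insert_le _ _).trans (by simp)
      omega
    have heT : e ∈ T.edgeSet := (mem_stE.mp (Finset.mem_sdiff.mp hei).1).1
    have h1 := K1 i e hei k hki
    have h2 := K1 j e hej k hkj
    have h3 := K1 i e hei j (fun h => hij h.symm)
    exact not_sep_of_sep_sep hcon heT h1.symm h2.symm h3
  set Wt : ℝ := ∑ e ∈ F, w e with hWt
  set d : Fin n → ℝ := fun i => ∑ e ∈ F \ Fi i, w e with hd
  have hdnonneg : ∀ i, 0 ≤ d i := fun i =>
    Finset.sum_nonneg fun e he => (hwpos e (Finset.sdiff_subset he)).le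
  have hDi : ∀ i, ∑ e ∈ Fi i, w e = Wt - d i := by
    intro i
    have h := Finset.sum_sdiff (f := w) (hsub i)
    rw [hWt, hd]
    linarith
  have hB : ∀ i : Fin n, ∑ e ∈ (Finset.univ.erase i).biUnion (fun j => F \ Fi j), w e
      = ∑ j ∈ Finset.univ.erase i, d j := by
    intro i
    exact Finset.sum_biUnion fun x _ y _ hxy => K2 x y hxy
  have hUsub : ∀ i : Fin n, (Finset.univ.erase i).biUnion (fun j => F \ Fi j) ⊆ F :=
    fun i => Finset.biUnion_subset.mpr fun j _ => Finset.sdiff_subset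
  have hBle : ∀ i : Fin n, ∑ j ∈ Finset.univ.erase i, d j ≤ Wt := by
    intro i
    rw [← hB i, hWt]
    exact Finset.sum_le_sum_of_subset_of_nonneg (hUsub i) fun e he _ => (hwpos e he).le
  have hsum : ∀ i : Fin n, ∑ j ∈ Finset.univ.erase i, graphDist T w (ι '' {k | k ≠ j})
      = ((n : ℝ) - 1) * Wt - ∑ j ∈ Finset.univ.erase i, d j := by
    intro i
    have h1 : ∀ j ∈ Finset.univ.erase i, graphDist T w (ι '' {k | k ≠ j}) = Wt - d j :=
      fun j _ => by rw [hkey j, hDi j]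
    rw [Finset.sum_congr rfl h1, Finset.sum_sub_distrib, Finset.sum_const,
      Finset.card_erase_of_mem (Finset.mem_univ i), Finset.card_univ, Fintype.card_fin,
      nsmul_eq_mul]
    have : ((n - 1 : ℕ) : ℝ) = (n : ℝ) - 1 := by
      have h2 : (1 : ℕ) ≤ n := by omega
      push_cast [h2]
      ring
    rw [this]
  refine ⟨?_, ?_⟩
  · intro i
    rw [hkey i, hDi i, hsum i]
    have h1 := hBle i
    have h2 := hdnonneg i
    have h3 : (0 : ℝ) ≤ (n : ℝ) - 2 := by linarith
    nlinarith [mul_nonneg h3 h2]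
  · intro i i' hEq1 hEq2
    by_contra hne
    have eqfact : ∀ i : Fin n,
        ((n : ℝ) - 2) * graphDist T w (ι '' {j | j ≠ i}) =
          ∑ j ∈ Finset.univ.erase i, graphDist T w (ι '' {k | k ≠ j}) →
        (F \ Fi i = ∅ ∧ F ⊆ (Finset.univ.erase i).biUnion fun j => F \ Fi j) := by
      intro i heq
      rw [hkey i, hDi i, hsum i] at heq
      have h1 := hBle i
      have h2 := hdnonneg i
      have hdi0 : d i = 0 := by
        have h4 : (0 : ℝ) ≤ ((n : ℝ) - 3) * d i := by
          apply mul_nonneg (by linarith) h2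
        nlinarith
      have hBW : ∑ j ∈ Finset.univ.erase i, d j = Wt := by nlinarith
      constructor
      · by_contra hFne
        obtain ⟨e, he⟩ := Finset.nonempty_iff_ne_empty.mpr hFne
        have hpos : 0 < d i :=
          Finset.sum_pos (fun f hf => hwpos f (Finset.sdiff_subset hf)) ⟨e, he⟩
        linarith
      · have hsum2 := Finset.sum_sdiff (f := w) (hUsub i)
        have hz : ∑ e ∈ F \ (Finset.univ.erase i).biUnion (fun j => F \ Fi j), w e = 0 := by
          rw [hB i] at hsum2
          rw [← hWt] at hsum2
          linarith
        intro e he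
        by_contra heU
        have hmem : e ∈ F \ (Finset.univ.erase i).biUnion (fun j => F \ Fi j) :=
          Finset.mem_sdiff.mpr ⟨he, heU⟩
        have hpos : 0 < ∑ e ∈ F \ (Finset.univ.erase i).biUnion (fun j => F \ Fi j), w e :=
          Finset.sum_pos (fun f hf => hwpos f (Finset.sdiff_subset hf)) ⟨e, hmem⟩
        linarith
    obtain ⟨hFi0, hFiU⟩ := eqfact i hEq1
    obtain ⟨hFi'0, -⟩ := eqfact i' hEq2
    have hne2 : ι i ≠ ι i' := fun h => hne (hι h)
    obtain ⟨p, hp⟩ : ∃ p : T.Walk (ι i) (ι i'), p.IsPath :=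
      (hcon.preconnected _ _).elim fun q => ⟨q.toPath.1, q.toPath.2⟩
    obtain ⟨e, hep⟩ := exists_mem_edges_of_ne hne2 p
    have hsep : Sep T e (ι i) (ι i') := sep_of_mem_edges hac hp hep
    have heT : e ∈ T.edgeSet := p.edges_subset_edgeSet hep
    have heF : e ∈ F := mem_stE.mpr ⟨heT,
      ι i, Finset.mem_image_of_mem ι (Finset.mem_univ i),
      ι i', Finset.mem_image_of_mem ι (Finset.mem_univ i'), hsep⟩
    obtain ⟨j, hj, hej⟩ := Finset.mem_biUnion.mp (hFiU heF)
    have hji : j ≠ i := (Finset.mem_erase.mp hj).1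
    by_cases hji' : j = i'
    · rw [hji', hFi'0] at hej
      exact absurd hej (Finset.notMem_empty e)
    · have hmemj : e ∈ Fi j := mem_stE.mpr ⟨heT,
        ι i, Finset.mem_image_of_mem ι
          (Finset.mem_erase.mpr ⟨fun h => hji h.symm, Finset.mem_univ _⟩),
        ι i', Finset.mem_image_of_mem ι
          (Finset.mem_erase.mpr ⟨fun h => hji' h.symm, Finset.mem_univ _⟩), hsep⟩
      exact absurd hmemj (Finset.mem_sdiff.mp hej).2
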